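/- Let V, U be independent random vectors in R^n with i.i.d. standard Gaussian entries, and let f(x) = n^{-1/2} * sum_{i=1}^n V_i (U_i x)^2 for x in R. Then for any real x1, x2, x3, x4: E[f(x1) f(x2) f(x3) f(x4)] = 3(9 + 96/n) x1^2 x2^2 x3^2 x4^2. -/

import Mathlib

open MeasureTheory ProbabilityTheory

section nn4aux
open Real Filter Set
open scoped ENNReal NNReal

noncomputable def nn4I (k : ℕ) : ℝ := ∫ x : ℝ, x ^ k * Real.exp (-(1/2) * x ^ 2)

lemma nn4_integrableI (k : ℕ) : Integrable fun x : ℝ => x ^ k * Real.exp (-(1/2) * x ^ 2) := by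
  have h := integrable_rpow_mul_exp_neg_mul_sq (b := 1/2) (by norm_num) (s := (k : ℝ))
    (neg_one_lt_zero.trans_le (Nat.cast_nonneg k))
  simpa [Real.rpow_natCast] using h

lemma nn4_tendsto (k : ℕ) : Tendsto (fun x : ℝ => x ^ k * Real.exp (-(1/2) * x ^ 2)) atTop (nhds 0) := by
  have h := rpow_mul_exp_neg_mul_sq_isLittleO_exp_neg (b := 1/2) (by norm_num) (k : ℝ)
  simp only [Real.rpow_natCast] at h
  refine h.trans_tendsto ?_
  have h2 : Tendsto (fun x : ℝ => x / 2) atTop atTop := tendsto_id.atTop_div_const two_pos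
  have := tendsto_exp_neg_atTop_nhds_zero.comp h2
  refine this.congr (fun x => ?_)
  simp [Function.comp]
  ring_nf

lemma nn4_tendsto_bot (k : ℕ) : Tendsto (fun x : ℝ => x ^ k * Real.exp (-(1/2) * x ^ 2)) atBot (nhds 0) := by
  have h : Tendsto (fun x : ℝ => ((-1:ℝ))^k * (x ^ k * Real.exp (-(1/2) * x ^ 2))) atTop (nhds (((-1:ℝ))^k * 0)) :=
    (nn4_tendsto k).const_mul _
  rw [mul_zero] at h
  have h2 := h.comp tendsto_neg_atBot_atTop
  refine h2.congr (fun x => ?_)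
  simp only [Function.comp_apply, ← mul_assoc, ← mul_pow, neg_sq]
  norm_num

lemma nn4I_rec (k : ℕ) : nn4I (k + 2) = (k + 1) * nn4I k := by
  set F : ℝ → ℝ := fun x => x ^ (k+1) * Real.exp (-(1/2) * x ^ 2) with hF
  set G : ℝ → ℝ := fun x => ((k:ℝ)+1) * (x ^ k * Real.exp (-(1/2) * x ^ 2)) - x ^ (k+2) * Real.exp (-(1/2) * x ^ 2) with hG
  have hGint : Integrable G := by
    exact ((nn4_integrableI k).const_mul ((k:ℝ)+1)).sub (nn4_integrableI (k+2))
  have hderiv : ∀ x : ℝ, HasDerivAt F (G x) x := by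
    intro x
    have h1 : HasDerivAt (fun x : ℝ => x ^ (k+1)) (((k:ℝ)+1) * x ^ k) x := by
      simpa using hasDerivAt_pow (k+1) x
    have h2 : HasDerivAt (fun x : ℝ => Real.exp (-(1/2) * x ^ 2)) (Real.exp (-(1/2) * x ^ 2) * (-(1/2) * (2 * x))) x := by
      exact (((hasDerivAt_pow 2 x).const_mul (-(1/2:ℝ)))).exp.congr_deriv (by simp)
    have : HasDerivAt F _ x := h1.mul h2
    convert this using 1
    show ((k:ℝ)+1) * (x ^ k * Real.exp (-(1/2) * x ^ 2)) - x ^ (k+2) * Real.exp (-(1/2) * x ^ 2) = _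
    ring
  have hcont : Continuous F :=
    (continuous_pow (k+1)).mul ((continuous_const.mul (continuous_pow 2)).rexp)
  have hIoi : ∫ x in Ioi (0:ℝ), G x = 0 - F 0 :=
    integral_Ioi_of_hasDerivAt_of_tendsto hcont.continuousWithinAt (fun x _ => hderiv x)
      hGint.integrableOn (nn4_tendsto (k+1))
  have hIic : ∫ x in Iic (0:ℝ), G x = F 0 - 0 :=
    integral_Iic_of_hasDerivAt_of_tendsto hcont.continuousWithinAt (fun x _ => hderiv x)
      hGint.integrableOn (nn4_tendsto_bot (k+1))
  have htot : ∫ x : ℝ, G x = 0 := by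
    rw [← intervalIntegral.integral_Iic_add_Ioi hGint.integrableOn hGint.integrableOn, hIoi, hIic]
    ring
  rw [hG] at htot
  rw [integral_sub ((nn4_integrableI k).const_mul _) (nn4_integrableI (k+2)),
    integral_const_mul] at htot
  have := sub_eq_zero.mp htot
  rw [nn4I, nn4I, ← this]


lemma nn4I_zero : nn4I 0 = Real.sqrt (2 * π) := by
  have := integral_gaussian (1/2)
  simp only [nn4I, pow_zero, one_mul]
  rw [this]
  norm_num
  exact mul_comm _ _

lemma nn4I_one : nn4I 1 = 0 := by
  have h := MeasureTheory.integral_neg_eq_self (fun x : ℝ => x ^ 1 * Real.exp (-(1/2) * x ^ 2)) (volume)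
  simp only [neg_sq, pow_one] at h
  have h2 : ∫ x : ℝ, -x * Real.exp (-(1/2) * x ^ 2) = - ∫ x : ℝ, x * Real.exp (-(1/2) * x ^ 2) := by
    rw [← integral_neg]
    congr 1; funext x; ring
  rw [h2] at h
  have : nn4I 1 = ∫ x : ℝ, x * Real.exp (-(1/2) * x ^ 2) := by
    simp [nn4I]
  rw [this]
  linarith

-- transfer to gaussianReal
lemma nn4_gauss_int (g : ℝ → ℝ) :
    ∫ x, g x ∂(gaussianReal 0 1) = ∫ x, gaussianPDFReal 0 1 x * g x := by
  rw [gaussianReal_of_var_ne_zero 0 one_ne_zero, gaussianPDF_def]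
  have hmeas : Measurable fun x => (gaussianPDFReal 0 1 x).toNNReal :=
    (measurable_gaussianPDFReal 0 1).real_toNNReal
  have : (fun x => ENNReal.ofReal (gaussianPDFReal 0 1 x))
      = fun x => ((gaussianPDFReal 0 1 x).toNNReal : ℝ≥0∞) := rfl
  rw [this, integral_withDensity_eq_integral_smul hmeas]
  congr 1; funext x
  simp [NNReal.smul_def, Real.coe_toNNReal _ (gaussianPDFReal_nonneg 0 1 x)]

lemma nn4_pdf_eq (x : ℝ) :
    gaussianPDFReal 0 1 x = (Real.sqrt (2 * π))⁻¹ * Real.exp (-(1/2) * x ^ 2) := by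
  rw [gaussianPDFReal_def]
  simp only [NNReal.coe_one, mul_one, sub_zero]
  congr 1
  ring

noncomputable def nn4M (k : ℕ) : ℝ := ∫ x, x ^ k ∂(gaussianReal 0 1)

lemma nn4M_eq (k : ℕ) : nn4M k = (Real.sqrt (2 * π))⁻¹ * nn4I k := by
  rw [nn4M, nn4_gauss_int]
  simp_rw [nn4_pdf_eq]
  rw [nn4I, ← integral_const_mul]
  congr 1; funext x; ring

lemma nn4_sqrt_ne : Real.sqrt (2 * π) ≠ 0 := by
  positivity

lemma nn4M0 : nn4M 0 = 1 := by rw [nn4M_eq, nn4I_zero, inv_mul_cancel₀ nn4_sqrt_ne]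
lemma nn4M1 : nn4M 1 = 0 := by rw [nn4M_eq, nn4I_one, mul_zero]
lemma nn4M2 : nn4M 2 = 1 := by
  have := nn4I_rec 0; rw [nn4M_eq, this, nn4I_zero]; push_cast; rw [← nn4I_zero]; 
  field_simp [nn4I_zero]
  norm_num
lemma nn4M3 : nn4M 3 = 0 := by
  have := nn4I_rec 1; rw [nn4M_eq, this, nn4I_one]; ring
lemma nn4M4 : nn4M 4 = 3 := by
  have h2 := nn4I_rec 2; have h0 := nn4I_rec 0
  rw [nn4M_eq, h2, h0, nn4I_zero]
  push_cast
  field_simp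
  ring
lemma nn4M6 : nn4M 6 = 15 := by
  have h4 := nn4I_rec 4; have h2 := nn4I_rec 2; have h0 := nn4I_rec 0
  rw [nn4M_eq, h4, h2, h0, nn4I_zero]
  push_cast; field_simp; ring
lemma nn4M8 : nn4M 8 = 105 := by
  have h6 := nn4I_rec 6; have h4 := nn4I_rec 4; have h2 := nn4I_rec 2; have h0 := nn4I_rec 0
  rw [nn4M_eq, h6, h4, h2, h0, nn4I_zero]
  push_cast; field_simp; ring

lemma nn4_integrable_pow (k : ℕ) : Integrable (fun x => x ^ k) (gaussianReal 0 1) := by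
  rw [gaussianReal_of_var_ne_zero 0 one_ne_zero, gaussianPDF_def]
  have hmeas : Measurable fun x => (gaussianPDFReal 0 1 x).toNNReal :=
    (measurable_gaussianPDFReal 0 1).real_toNNReal
  have : (fun x => ENNReal.ofReal (gaussianPDFReal 0 1 x))
      = fun x => ((gaussianPDFReal 0 1 x).toNNReal : ℝ≥0∞) := rfl
  rw [this, integrable_withDensity_iff_integrable_smul hmeas]
  have : (fun x => (gaussianPDFReal 0 1 x).toNNReal • x ^ k)
      = fun x => (Real.sqrt (2 * π))⁻¹ * (x ^ k * Real.exp (-(1/2) * x ^ 2)) := by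
    funext x
    rw [NNReal.smul_def, Real.coe_toNNReal _ (gaussianPDFReal_nonneg 0 1 x), nn4_pdf_eq,
      smul_eq_mul]
    ring
  rw [this]
  exact (nn4_integrableI k).const_mul _

lemma nn4_pi_integral {ι : Type*} [Fintype ι] (m : Measure ℝ) [SigmaFinite m] (g : ι → ℝ → ℝ) :
    ∫ v : ι → ℝ, ∏ i, g i (v i) ∂(Measure.pi fun _ => m) = ∏ i, ∫ x, g i x ∂m := by
  letI : MeasureSpace ℝ := ⟨m⟩
  haveI : SigmaFinite (volume : Measure ℝ) := ‹SigmaFinite m›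
  exact MeasureTheory.integral_fintype_prod_eq_prod g

lemma nn4_pi_integrable {ι : Type*} [Fintype ι] (m : Measure ℝ) [SigmaFinite m] (g : ι → ℝ → ℝ)
    (hg : ∀ i, Integrable (g i) m) :
    Integrable (fun v : ι → ℝ => ∏ i, g i (v i)) (Measure.pi fun _ => m) := by
  letI : MeasureSpace ℝ := ⟨m⟩
  haveI : SigmaFinite (volume : Measure ℝ) := ‹SigmaFinite m›
  exact MeasureTheory.Integrable.fintype_prod hg
noncomputable def nn4W (c : ℕ) : ℝ := nn4M c * nn4M (2 * c)
lemma nn4W0 : nn4W 0 = 1 := by simp [nn4W, nn4M0]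
lemma nn4W1 : nn4W 1 = 0 := by simp [nn4W, nn4M1]
lemma nn4W2 : nn4W 2 = 3 := by norm_num [nn4W, nn4M2, nn4M4]
lemma nn4W3 : nn4W 3 = 0 := by norm_num [nn4W, nn4M3]
lemma nn4W4 : nn4W 4 = 315 := by norm_num [nn4W, nn4M4, nn4M8]

variable {n : ℕ}

def nn4c (i j k l t : Fin n) : ℕ :=
  (if i = t then 1 else 0) + (if j = t then 1 else 0) + (if k = t then 1 else 0) +
    (if l = t then 1 else 0)

lemma nn4_prodW1 (a : Fin n) (x : ℕ) : ∏ t, nn4W (if a = t then x else 0) = nn4W x := by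
  have h : ∀ t, nn4W (if a = t then x else 0) = (if a = t then nn4W x else 1) := by
    intro t; split_ifs <;> simp [nn4W0]
  simp_rw [h]
  simp [Finset.prod_ite_eq]

lemma nn4_prodW2 {a b : Fin n} (hab : a ≠ b) (x y : ℕ) :
    ∏ t, nn4W ((if a = t then x else 0) + (if b = t then y else 0)) = nn4W x * nn4W y := by
  have h : ∀ t, nn4W ((if a = t then x else 0) + (if b = t then y else 0))
      = (if a = t then nn4W x else 1) * (if b = t then nn4W y else 1) := by
    intro t
    split_ifs with h1 h2
    · exact absurd (h1.trans h2.symm) hab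
    · simp
    · simp
    · simp [nn4W0]
  simp_rw [h, Finset.prod_mul_distrib]
  simp [Finset.prod_ite_eq]

lemma nn4Q (i j k l : Fin n) :
    ∏ t, nn4W (nn4c i j k l t) =
      315 * ((if i = j then (1:ℝ) else 0) * (if j = k then (1:ℝ) else 0) * (if k = l then (1:ℝ) else 0))
      + 9 * ((if i = j then (1:ℝ) else 0) * (if k = l then (1:ℝ) else 0) * (1 - (if i = k then (1:ℝ) else 0)))
      + 9 * ((if i = k then (1:ℝ) else 0) * (if j = l then (1:ℝ) else 0) * (1 - (if i = j then (1:ℝ) else 0)))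
      + 9 * ((if i = l then (1:ℝ) else 0) * (if j = k then (1:ℝ) else 0) * (1 - (if i = j then (1:ℝ) else 0))) := by
  rcases eq_or_ne i j with rfl | hij
  · rcases eq_or_ne i k with rfl | hik
    · rcases eq_or_ne i l with rfl | hil
      · -- all equal
        have hcalc : ∏ t, nn4W (nn4c i i i i t) = nn4W 4 := by
          rw [Finset.prod_congr rfl (fun t _ => (by congr 1; simp only [nn4c]; split_ifs <;> omega :
            nn4W (nn4c i i i i t) = nn4W (if i = t then 4 else 0)))]
          exact nn4_prodW1 i 4
        rw [hcalc, nn4W4]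
        norm_num
      · -- i=j=k ≠ l
        have : ∏ t, nn4W (nn4c i i i l t) = 0 := by
          refine Finset.prod_eq_zero (Finset.mem_univ l) ?_
          have hc : nn4c i i i l l = 1 := by simp [nn4c, hil]
          rw [hc, nn4W1]
        rw [this]
        simp [hil, hil.symm]
    · rcases eq_or_ne k l with rfl | hkl
      · -- i=j, k=l, i≠k
        have hcalc : ∏ t, nn4W (nn4c i i k k t) = nn4W 2 * nn4W 2 := by
          rw [Finset.prod_congr rfl (fun t _ => (by congr 1; simp only [nn4c]; split_ifs <;> omega :
            nn4W (nn4c i i k k t) = nn4W ((if i = t then 2 else 0) + (if k = t then 2 else 0))))]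
          exact nn4_prodW2 hik 2 2
        rw [hcalc, nn4W2]
        simp [hik]
        norm_num
      · -- i=j, k, l with k≠l
        have : ∏ t, nn4W (nn4c i i k l t) = 0 := by
          refine Finset.prod_eq_zero (Finset.mem_univ k) ?_
          rcases eq_or_ne i l with rfl | hil
          · have hc : nn4c i i k i k = 1 := by simp [nn4c, hik]
            rw [hc, nn4W1]
          · have hc : nn4c i i k l k = 1 := by simp [nn4c, hik, Ne.symm hkl]
            rw [hc, nn4W1]
        rw [this]
        rcases eq_or_ne i l with rfl | hil
        · simp [hik, Ne.symm hik, hkl, Ne.symm hkl]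
        · simp [hik, Ne.symm hik, hkl, Ne.symm hkl, hil, Ne.symm hil]
  · rcases eq_or_ne i k with rfl | hik
    · rcases eq_or_ne j l with rfl | hjl
      · -- i=k, j=l, i≠j
        have hcalc : ∏ t, nn4W (nn4c i j i j t) = nn4W 2 * nn4W 2 := by
          rw [Finset.prod_congr rfl (fun t _ => (by congr 1; simp only [nn4c]; split_ifs <;> omega :
            nn4W (nn4c i j i j t) = nn4W ((if i = t then 2 else 0) + (if j = t then 2 else 0))))]
          exact nn4_prodW2 hij 2 2
        rw [hcalc, nn4W2]
        simp [hij, hij.symm]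
        norm_num
      · -- i=k, j≠l
        have : ∏ t, nn4W (nn4c i j i l t) = 0 := by
          refine Finset.prod_eq_zero (Finset.mem_univ j) ?_
          rcases eq_or_ne j l with h | h
          · exact absurd h hjl
          · have hc : nn4c i j i l j = 1 := by simp [nn4c, hij, Ne.symm hjl]
            rw [hc, nn4W1]
        rw [this]
        simp [hij, Ne.symm hij, hjl, Ne.symm hjl]
    · rcases eq_or_ne i l with rfl | hil
      · rcases eq_or_ne j k with rfl | hjk
        · -- i=l, j=k, i≠j
          have hcalc : ∏ t, nn4W (nn4c i j j i t) = nn4W 2 * nn4W 2 := by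
            rw [Finset.prod_congr rfl (fun t _ => (by congr 1; simp only [nn4c]; split_ifs <;> omega :
              nn4W (nn4c i j j i t) = nn4W ((if i = t then 2 else 0) + (if j = t then 2 else 0))))]
            exact nn4_prodW2 hij 2 2
          rw [hcalc, nn4W2]
          simp [hij, hik]
          norm_num
        · -- i=l, j≠k, i≠j, i≠k
          have : ∏ t, nn4W (nn4c i j k i t) = 0 := by
            refine Finset.prod_eq_zero (Finset.mem_univ j) ?_
            rcases eq_or_ne j i with h | hji
            · exact absurd h.symm hij
            · have hc : nn4c i j k i j = 1 := by simp [nn4c, hij, Ne.symm hjk]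
              rw [hc, nn4W1]
          rw [this]
          simp [hij, Ne.symm hij, hik, Ne.symm hik, hjk, Ne.symm hjk]
      · rcases eq_or_ne j k with rfl | hjk
        · rcases eq_or_ne j l with rfl | hjl
          · -- j=k=l≠i
            have : ∏ t, nn4W (nn4c i j j j t) = 0 := by
              refine Finset.prod_eq_zero (Finset.mem_univ i) ?_
              have hc : nn4c i j j j i = 1 := by simp [nn4c, Ne.symm hij]
              rw [hc, nn4W1]
            rw [this]
            simp [hij, Ne.symm hij, hil, Ne.symm hil]
          · -- j=k, j≠l, i≠j, i≠l
            have : ∏ t, nn4W (nn4c i j j l t) = 0 := by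
              refine Finset.prod_eq_zero (Finset.mem_univ i) ?_
              have hc : nn4c i j j l i = 1 := by simp [nn4c, Ne.symm hij, Ne.symm hil]
              rw [hc, nn4W1]
            rw [this]
            simp [hij, Ne.symm hij, hil, Ne.symm hil, hjl, Ne.symm hjl]
        · rcases eq_or_ne j l with rfl | hjl
          · -- j=l, i≠j, i≠k, j≠k
            have : ∏ t, nn4W (nn4c i j k j t) = 0 := by
              refine Finset.prod_eq_zero (Finset.mem_univ i) ?_
              have hc : nn4c i j k j i = 1 := by simp [nn4c, Ne.symm hij, Ne.symm hik]
              rw [hc, nn4W1]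
            rw [this]
            simp [hij, Ne.symm hij, hik, Ne.symm hik, hjk, Ne.symm hjk]
          · rcases eq_or_ne k l with rfl | hkl
            · -- k=l, i≠j,i≠k,j≠k
              have : ∏ t, nn4W (nn4c i j k k t) = 0 := by
                refine Finset.prod_eq_zero (Finset.mem_univ i) ?_
                have hc : nn4c i j k k i = 1 := by simp [nn4c, Ne.symm hij, Ne.symm hik]
                rw [hc, nn4W1]
              rw [this]
              simp [hij, Ne.symm hij, hik, Ne.symm hik, hjk, Ne.symm hjk]
            · -- all distinct
              have : ∏ t, nn4W (nn4c i j k l t) = 0 := by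
                refine Finset.prod_eq_zero (Finset.mem_univ i) ?_
                have hc : nn4c i j k l i = 1 := by simp [nn4c, Ne.symm hij, Ne.symm hik, Ne.symm hil]
                rw [hc, nn4W1]
              rw [this]
              simp [hij, Ne.symm hij, hik, Ne.symm hik, hil, Ne.symm hil, hjk, Ne.symm hjk, hjl, Ne.symm hjl, hkl, Ne.symm hkl]

variable {n : ℕ}

def nn4E (a b : Fin n) : ℝ := if a = b then 1 else 0

lemma nn4E_sum (a : Fin n) : ∑ b, nn4E a b = 1 := by simp [nn4E, Finset.sum_ite_eq]

lemma nn4_count (n : ℕ) :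
    ∑ i : Fin n, ∑ j : Fin n, ∑ k : Fin n, ∑ l : Fin n,
      (315 * (nn4E i j * nn4E j k * nn4E k l)
      + 9 * (nn4E i j * nn4E k l * (1 - nn4E i k))
      + 9 * (nn4E i k * nn4E j l * (1 - nn4E i j))
      + 9 * (nn4E i l * nn4E j k * (1 - nn4E i j)))
      = 27 * (n:ℝ)^2 + 288 * n := by
  have hl : ∀ i j k : Fin n, ∑ l : Fin n,
      (315 * (nn4E i j * nn4E j k * nn4E k l)
      + 9 * (nn4E i j * nn4E k l * (1 - nn4E i k))
      + 9 * (nn4E i k * nn4E j l * (1 - nn4E i j))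
      + 9 * (nn4E i l * nn4E j k * (1 - nn4E i j)))
      = (315 * (nn4E i j * nn4E j k) + 9 * (nn4E i j * (1 - nn4E i k)))
        + 9 * (nn4E i k * (1 - nn4E i j))
        + 9 * (nn4E j k * (1 - nn4E i j)) := by
    intro i j k
    rw [Finset.sum_congr rfl (fun l _ => (by ring :
      (315 * (nn4E i j * nn4E j k * nn4E k l)
      + 9 * (nn4E i j * nn4E k l * (1 - nn4E i k))
      + 9 * (nn4E i k * nn4E j l * (1 - nn4E i j))
      + 9 * (nn4E i l * nn4E j k * (1 - nn4E i j)))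
      = (315 * (nn4E i j * nn4E j k) + 9 * (nn4E i j * (1 - nn4E i k))) * nn4E k l
        + (9 * (nn4E i k * (1 - nn4E i j))) * nn4E j l
        + (9 * (nn4E j k * (1 - nn4E i j))) * nn4E i l))]
    rw [Finset.sum_add_distrib, Finset.sum_add_distrib, ← Finset.mul_sum, ← Finset.mul_sum,
      ← Finset.mul_sum, nn4E_sum, nn4E_sum, nn4E_sum, mul_one, mul_one, mul_one]
  have hk : ∀ i j : Fin n, ∑ k : Fin n,
      ((315 * (nn4E i j * nn4E j k) + 9 * (nn4E i j * (1 - nn4E i k)))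
        + 9 * (nn4E i k * (1 - nn4E i j))
        + 9 * (nn4E j k * (1 - nn4E i j)))
      = (315 * nn4E i j + 9 * (1 - nn4E i j)) + (9 * (1 - nn4E i j) - 9 * nn4E i j)
        + (n : ℝ) * (9 * nn4E i j) := by
    intro i j
    rw [Finset.sum_congr rfl (fun k _ => (by ring :
      ((315 * (nn4E i j * nn4E j k) + 9 * (nn4E i j * (1 - nn4E i k)))
        + 9 * (nn4E i k * (1 - nn4E i j))
        + 9 * (nn4E j k * (1 - nn4E i j)))
      = (315 * nn4E i j + 9 * (1 - nn4E i j)) * nn4E j k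
        + (9 * (1 - nn4E i j) - 9 * nn4E i j) * nn4E i k
        + 9 * nn4E i j))]
    rw [Finset.sum_add_distrib, Finset.sum_add_distrib, ← Finset.mul_sum, ← Finset.mul_sum,
      nn4E_sum, nn4E_sum, mul_one, mul_one, Finset.sum_const, Finset.card_univ,
      Fintype.card_fin, nsmul_eq_mul]
  have hj : ∀ i : Fin n, ∑ j : Fin n,
      ((315 * nn4E i j + 9 * (1 - nn4E i j)) + (9 * (1 - nn4E i j) - 9 * nn4E i j)
        + (n : ℝ) * (9 * nn4E i j))
      = 27 * (n:ℝ) + 288 := by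
    intro i
    rw [Finset.sum_congr rfl (fun j _ => (by ring :
      ((315 * nn4E i j + 9 * (1 - nn4E i j)) + (9 * (1 - nn4E i j) - 9 * nn4E i j)
        + (n : ℝ) * (9 * nn4E i j))
      = (315 - 18 - 9 + 9 * (n:ℝ)) * nn4E i j + 18))]
    rw [Finset.sum_add_distrib, ← Finset.mul_sum, nn4E_sum, mul_one, Finset.sum_const,
      Finset.card_univ, Fintype.card_fin, nsmul_eq_mul]
    ring
  simp_rw [hl, hk, hj]
  rw [Finset.sum_const, Finset.card_univ, Fintype.card_fin, nsmul_eq_mul]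
  ring
lemma nn4_prod_pow {n : ℕ} (v : Fin n → ℝ) (d : ℕ) (i j k l : Fin n) :
    ∏ t, v t ^ (d * nn4c i j k l t) = v i ^ d * v j ^ d * v k ^ d * v l ^ d := by
  simp only [nn4c, mul_add, pow_add, Finset.prod_mul_distrib, mul_ite, mul_one, mul_zero]
  simp only [pow_ite, pow_zero, Finset.prod_ite_eq, Finset.mem_univ, if_true]

lemma nn4_expand {n : ℕ} (g : Fin n → ℝ) :
    (∑ i, g i) ^ 4 = ∑ i, ∑ j, ∑ k, ∑ l, g i * g j * g k * g l := by
  have h : (∑ i, g i) ^ 4 = (∑ i, g i) * (∑ j, g j) * (∑ k, g k) * (∑ l, g l) := by ring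
  rw [h]
  simp only [Finset.sum_mul, Finset.mul_sum]
  exact Finset.sum_congr rfl fun _ _ => Finset.sum_congr rfl fun _ _ =>
    Finset.sum_congr rfl fun _ _ => Finset.sum_congr rfl fun _ _ => by ring

lemma nn4_key (n : ℕ) :
    ∫ p : (Fin n → ℝ) × (Fin n → ℝ), (∑ i, p.1 i * p.2 i ^ 2) ^ 4
      ∂((Measure.pi fun _ : Fin n => gaussianReal 0 1).prod
        (Measure.pi fun _ : Fin n => gaussianReal 0 1))
      = 27 * (n:ℝ)^2 + 288 * n := by
  set γ : Measure ℝ := gaussianReal 0 1 with hγ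
  set P : Measure (Fin n → ℝ) := Measure.pi fun _ : Fin n => γ with hP
  have hpt : ∀ p : (Fin n → ℝ) × (Fin n → ℝ),
      (∑ i, p.1 i * p.2 i ^ 2) ^ 4
      = ∑ i, ∑ j, ∑ k, ∑ l,
          (∏ t, p.1 t ^ (1 * nn4c i j k l t)) * (∏ t, p.2 t ^ (2 * nn4c i j k l t)) := by
    intro p
    rw [nn4_expand]
    refine Finset.sum_congr rfl fun i _ => Finset.sum_congr rfl fun j _ =>
      Finset.sum_congr rfl fun k _ => Finset.sum_congr rfl fun l _ => ?_
    rw [nn4_prod_pow, nn4_prod_pow]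
    ring
  have hA : ∀ (c : Fin n → ℕ), Integrable (fun v : Fin n → ℝ => ∏ t, v t ^ c t) P :=
    fun c => nn4_pi_integrable γ (fun t => fun x => x ^ c t) (fun t => nn4_integrable_pow (c t))
  have hint4 : ∀ i j k l : Fin n, Integrable
      (fun p : (Fin n → ℝ) × (Fin n → ℝ) =>
        (∏ t, p.1 t ^ (1 * nn4c i j k l t)) * (∏ t, p.2 t ^ (2 * nn4c i j k l t))) (P.prod P) :=
    fun i j k l => (hA _).mul_prod (hA _)
  simp_rw [hpt]
  rw [integral_finset_sum _ (fun i _ => integrable_finset_sum _ (fun j _ =>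
    integrable_finset_sum _ (fun k _ => integrable_finset_sum _ (fun l _ => hint4 i j k l))))]
  have hterm : ∀ i j k l : Fin n,
      (∫ p : (Fin n → ℝ) × (Fin n → ℝ),
        (∏ t, p.1 t ^ (1 * nn4c i j k l t)) * (∏ t, p.2 t ^ (2 * nn4c i j k l t)) ∂(P.prod P))
      = ∏ t, nn4W (nn4c i j k l t) := by
    intro i j k l
    rw [integral_prod_mul (f := fun v : Fin n → ℝ => ∏ t, v t ^ (1 * nn4c i j k l t))
      (g := fun v : Fin n → ℝ => ∏ t, v t ^ (2 * nn4c i j k l t))]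
    rw [nn4_pi_integral γ (fun t => fun x => x ^ (1 * nn4c i j k l t)),
      nn4_pi_integral γ (fun t => fun x => x ^ (2 * nn4c i j k l t))]
    rw [← Finset.prod_mul_distrib]
    exact Finset.prod_congr rfl fun t _ => by rw [one_mul]; rfl
  calc ∑ i, ∫ p : (Fin n → ℝ) × (Fin n → ℝ), (∑ j, ∑ k, ∑ l,
          (∏ t, p.1 t ^ (1 * nn4c i j k l t)) * (∏ t, p.2 t ^ (2 * nn4c i j k l t))) ∂(P.prod P)
      = ∑ i, ∑ j, ∑ k, ∑ l, ∏ t, nn4W (nn4c i j k l t) := by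
        refine Finset.sum_congr rfl fun i _ => ?_
        rw [integral_finset_sum _ (fun j _ => integrable_finset_sum _ (fun k _ =>
          integrable_finset_sum _ (fun l _ => hint4 i j k l)))]
        refine Finset.sum_congr rfl fun j _ => ?_
        rw [integral_finset_sum _ (fun k _ => integrable_finset_sum _ (fun l _ => hint4 i j k l))]
        refine Finset.sum_congr rfl fun k _ => ?_
        rw [integral_finset_sum _ (fun l _ => hint4 i j k l)]
        exact Finset.sum_congr rfl fun l _ => hterm i j k l
    _ = 27 * (n:ℝ)^2 + 288 * n := by
        simp_rw [nn4Q]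
        have := nn4_count n
        simp only [nn4E] at this
        exact this

end nn4aux

/-- `E[f(x₁)f(x₂)f(x₃)f(x₄)] = 3(9 + 96/n) x₁²x₂²x₃²x₄²` for the width-`n`
one-hidden-layer network `f(x) = n^{-1/2} ∑ i, V i * (U i * x)^2` with
independent i.i.d. standard Gaussian weight vectors `V, U`. -/
theorem stmt_1 (n : ℕ) (hn : 1 ≤ n)
    (μ : Measure ((Fin n → ℝ) × (Fin n → ℝ)))
    (hμ : μ = (Measure.pi fun _ : Fin n => gaussianReal 0 1).prod
      (Measure.pi fun _ : Fin n => gaussianReal 0 1))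
    (f : ℝ → (Fin n → ℝ) × (Fin n → ℝ) → ℝ)
    (hf : ∀ x p, f x p = (Real.sqrt n)⁻¹ * ∑ i, p.1 i * (p.2 i * x) ^ 2)
    (x₁ x₂ x₃ x₄ : ℝ) :
    (∫ p, f x₁ p * f x₂ p * f x₃ p * f x₄ p ∂μ)
      = 3 * (9 + 96 / (n : ℝ)) * x₁ ^ 2 * x₂ ^ 2 * x₃ ^ 2 * x₄ ^ 2 := by
  subst hμ
  have hn0 : (n : ℝ) ≠ 0 := Nat.cast_ne_zero.mpr (Nat.one_le_iff_ne_zero.mp hn)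
  have hsum : ∀ (x : ℝ) (p : (Fin n → ℝ) × (Fin n → ℝ)),
      ∑ i, p.1 i * (p.2 i * x) ^ 2 = x ^ 2 * ∑ i, p.1 i * p.2 i ^ 2 := by
    intro x p
    rw [Finset.mul_sum]
    exact Finset.sum_congr rfl fun i _ => by ring
  have hc : ((Real.sqrt n)⁻¹) ^ 4 = ((n:ℝ) ^ 2)⁻¹ := by
    rw [inv_pow, show (4:ℕ) = 2 * 2 from rfl, pow_mul, Real.sq_sqrt (Nat.cast_nonneg n)]
  have hpt : ∀ p : (Fin n → ℝ) × (Fin n → ℝ),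
      f x₁ p * f x₂ p * f x₃ p * f x₄ p
      = (((n:ℝ) ^ 2)⁻¹ * (x₁ ^ 2 * x₂ ^ 2 * x₃ ^ 2 * x₄ ^ 2))
        * (∑ i, p.1 i * p.2 i ^ 2) ^ 4 := by
    intro p
    rw [hf, hf, hf, hf, hsum, hsum, hsum, hsum, ← hc]
    ring
  rw [show (∫ p, f x₁ p * f x₂ p * f x₃ p * f x₄ p
      ∂((Measure.pi fun _ : Fin n => gaussianReal 0 1).prod
        (Measure.pi fun _ : Fin n => gaussianReal 0 1)))
    = ∫ p : (Fin n → ℝ) × (Fin n → ℝ),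
        (((n:ℝ) ^ 2)⁻¹ * (x₁ ^ 2 * x₂ ^ 2 * x₃ ^ 2 * x₄ ^ 2))
          * (∑ i, p.1 i * p.2 i ^ 2) ^ 4
      ∂((Measure.pi fun _ : Fin n => gaussianReal 0 1).prod
        (Measure.pi fun _ : Fin n => gaussianReal 0 1))
    from integral_congr_ae (Filter.Eventually.of_forall hpt)]
  rw [integral_const_mul, nn4_key n]
  field_simp
  ring
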